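/- Removing a loop between two occurrences of the same node with the same accumulated inventory preserves validity: if x₁,…,xₙ is a valid inventory-driven path and i < j satisfy x_i = x_j and ⋃_{l ≤ i} obj(x_l) = ⋃_{l ≤ j} obj(x_l), then the path x₁,…,x_i, x_{j+1},…,xₙ is also valid, with the same endpoints and strictly smaller length. -/

import Mathlib

/-- Validity of an inventory-driven path (empty initial inventory). -/
def ValidPath {M I : Type*} (adj : M → Set M) (obj req : M → Set I)
    (σ : List M) : Prop :=
  σ.Chain' (fun a b => b ∈ adj a) ∧
  ∀ i (h : i < σ.length), req (σ.get ⟨i, h⟩) ⊆ ⋃ x ∈ σ.take i, obj x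

lemma biUnion_append' {M I : Type*} (f : M → Set I) (a b : List M) :
    (⋃ x ∈ (a ++ b), f x) = (⋃ x ∈ a, f x) ∪ ⋃ x ∈ b, f x := by
  ext y; simp [List.mem_append, or_and_right, exists_or]

/-- Excising a loop between two occurrences of the same node with the same accumulated
inventory preserves validity and endpoints, and strictly decreases length. -/
theorem stmt_10 {M I : Type*} (adj : M → Set M) (obj req : M → Set I)
    (σ : List M) (hvalid : ValidPath adj obj req σ)
    (i j : ℕ) (hij : i < j) (hj : j < σ.length)
    (hnode : σ.get ⟨i, lt_trans hij hj⟩ = σ.get ⟨j, hj⟩)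
    (hinv : (⋃ x ∈ σ.take (i + 1), obj x) = ⋃ x ∈ σ.take (j + 1), obj x) :
    ValidPath adj obj req (σ.take (i + 1) ++ σ.drop (j + 1)) ∧
    (σ.take (i + 1) ++ σ.drop (j + 1)).head? = σ.head? ∧
    (σ.take (i + 1) ++ σ.drop (j + 1)).getLast? = σ.getLast? ∧
    (σ.take (i + 1) ++ σ.drop (j + 1)).length < σ.length := by
  obtain ⟨hchain, hreq⟩ := hvalid
  set τ := σ.take (i + 1) ++ σ.drop (j + 1) with hτ
  have hlt : (σ.take (i+1)).length = i + 1 := by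
    rw [List.length_take]; omega
  have hlτ : τ.length = (i+1) + (σ.length - (j+1)) := by
    simp [hτ, List.length_take, List.length_drop]; omega
  -- get for small indices
  have hget1 : ∀ l (h : l < τ.length), l ≤ i → τ.get ⟨l, h⟩ = σ.get ⟨l, by omega⟩ := by
    intro l h hl
    simp only [hτ, List.get_eq_getElem]
    rw [List.getElem_append_left (by omega), List.getElem_take]
  have hget2 : ∀ l (h : l < τ.length) (hl : i + 1 ≤ l),
      τ.get ⟨l, h⟩ = σ.get ⟨j + 1 + (l - (i+1)), by omega⟩ := by
    intro l h hl
    simp only [hτ, List.get_eq_getElem]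
    rw [List.getElem_append_right (by omega)]
    simp [List.getElem_drop, hlt]
  -- take of τ for small indices
  have htake1 : ∀ l, l ≤ i + 1 → τ.take l = σ.take l := by
    intro l hl
    rw [hτ, List.take_append, hlt, List.take_take,
      min_eq_left hl]
    have : l - (i+1) = 0 := by omega
    simp [this]
  have htake2 : ∀ l, i + 1 ≤ l →
      τ.take l = σ.take (i+1) ++ (σ.drop (j+1)).take (l - (i+1)) := by
    intro l hl
    rw [hτ, List.take_append, hlt, List.take_take,
      min_eq_right hl]
  -- union equation for large indices
  have hU : ∀ l, i + 1 ≤ l →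
      (⋃ x ∈ τ.take l, obj x) = ⋃ x ∈ σ.take (j + 1 + (l - (i+1))), obj x := by
    intro l hl
    rw [htake2 l hl, biUnion_append', hinv, ← biUnion_append', ← List.take_add]
  have hchain' : ∀ k (h : k + 1 < σ.length),
      σ.get ⟨k+1, h⟩ ∈ adj (σ.get ⟨k, by omega⟩) := by
    simp only [List.Chain'] at hchain
    rw [List.isChain_iff_getElem] at hchain
    intro k h; exact hchain k (by omega)
  refine ⟨⟨?_, ?_⟩, ?_, ?_, ?_⟩
  · simp only [List.Chain']
    rw [List.isChain_iff_getElem]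
    intro p hp
    show τ.get ⟨p+1, hp⟩ ∈ adj (τ.get ⟨p, by omega⟩)
    rcases lt_trichotomy p i with h1 | h1 | h1
    · rw [hget1 p (by omega) (by omega), hget1 (p+1) (by omega) (by omega)]
      exact hchain' p (by omega)
    · subst h1
      rw [hget1 p (by omega) (by omega), hget2 (p+1) (by omega) (by omega)]
      have : j + 1 + (p + 1 - (p+1)) = j + 1 := by omega
      rw [hnode]
      convert hchain' j (by omega) using 3
    · rw [hget2 p (by omega) (by omega), hget2 (p+1) (by omega) (by omega)]
      have e : j + 1 + (p + 1 - (i+1)) = (j + 1 + (p - (i+1))) + 1 := by omega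
      convert hchain' (j + 1 + (p - (i+1))) (by omega) using 3
  · intro l h
    rcases le_or_gt l i with h1 | h1
    · rw [hget1 l h h1, htake1 l (by omega)]
      exact hreq l (by omega)
    · rw [hget2 l h (by omega), hU l (by omega)]
      exact hreq _ (by omega)
  · have h0 : 0 < τ.length := by omega
    have h0' : 0 < σ.length := by omega
    rw [List.head?_eq_getElem?, List.head?_eq_getElem?,
      List.getElem?_eq_getElem h0, List.getElem?_eq_getElem h0']
    exact congrArg some (hget1 0 h0 (by omega))
  · rw [List.getLast?_eq_getElem?, List.getLast?_eq_getElem?]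
    have h0 : 0 < τ.length := by omega
    have h0' : 0 < σ.length := by omega
    rw [List.getElem?_eq_getElem (by omega : τ.length - 1 < τ.length),
      List.getElem?_eq_getElem (by omega : σ.length - 1 < σ.length)]
    refine congrArg some ?_
    rcases eq_or_lt_of_le (by omega : j + 1 ≤ σ.length) with he | he
    · have hi : τ.length - 1 = i := by omega
      have := hget1 (τ.length - 1) (by omega) (by omega)
      simp only [List.get_eq_getElem] at this hnode ⊢
      rw [this]
      have : σ.length - 1 = j := by omega
      simp_rw [hi, this]
      exact hnode
    · have := hget2 (τ.length - 1) (by omega) (by omega)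
      simp only [List.get_eq_getElem] at this ⊢
      rw [this]
      congr 1
      omega
  · omega
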